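/- Let k ≥ 2 be an integer, let G be a finite connected simple graph, and let H be a finite simple graph that contains an isolated vertex and satisfies γ_{[1,k]}(H) > k. If G admits a total [1,k]-dominating set, then γ_{[1,k]}(G ∘ H) = γ_{t[1,k]}(G). -/

import Mathlib

/-- `D` is a `[1,k]`-dominating set of `G`: every vertex outside `D` is adjacent to
at least one and at most `k` vertices of `D`. -/
def IsOneKDom {V : Type*} (G : SimpleGraph V) (k : ℕ) (D : Set V) : Prop :=
  ∀ v ∉ D, 1 ≤ {u ∈ D | G.Adj v u}.ncard ∧ {u ∈ D | G.Adj v u}.ncard ≤ k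

/-- `D` is a total `[1,k]`-dominating set of `G`: every vertex is adjacent to
at least one and at most `k` vertices of `D`. -/
def IsTotalOneKDom {V : Type*} (G : SimpleGraph V) (k : ℕ) (D : Set V) : Prop :=
  ∀ v : V, 1 ≤ {u ∈ D | G.Adj v u}.ncard ∧ {u ∈ D | G.Adj v u}.ncard ≤ k

/-- The `[1,k]`-domination number: minimum cardinality of a `[1,k]`-dominating set. -/
noncomputable def oneKDomNum {V : Type*} [Fintype V] (G : SimpleGraph V) (k : ℕ) : ℕ :=
  sInf {m | ∃ D : Set V, IsOneKDom G k D ∧ D.ncard = m}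

/-- The total `[1,k]`-domination number: minimum cardinality of a total
`[1,k]`-dominating set. -/
noncomputable def totalOneKDomNum {V : Type*} [Fintype V] (G : SimpleGraph V) (k : ℕ) : ℕ :=
  sInf {m | ∃ D : Set V, IsTotalOneKDom G k D ∧ D.ncard = m}

/-- The lexicographic product `G ∘ H`. -/
def lexProd {α β : Type*} (G : SimpleGraph α) (H : SimpleGraph β) :
    SimpleGraph (α × β) where
  Adj a b := G.Adj a.1 b.1 ∨ (a.1 = b.1 ∧ H.Adj a.2 b.2)
  symm := by
    constructor
    rintro ⟨g, h⟩ ⟨g', h'⟩ (hadj | ⟨rfl, hadj⟩)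
    · exact Or.inl hadj.symm
    · exact Or.inr ⟨rfl, hadj.symm⟩
  loopless := by
    constructor
    rintro ⟨g, h⟩ (hadj | ⟨-, hadj⟩)
    · exact G.ne_of_adj hadj rfl
    · exact H.ne_of_adj hadj rfl

lemma lexProd_adj {α β : Type*} (G : SimpleGraph α) (H : SimpleGraph β)
    (a b : α × β) : (lexProd G H).Adj a b ↔ G.Adj a.1 b.1 ∨ (a.1 = b.1 ∧ H.Adj a.2 b.2) :=
  Iff.rfl

/-- Theorem 4.4 of [GIPS], first case: if `k ≥ 2`, `G` is a finite connected graph,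
`H` is a finite graph with an isolated vertex and `γ_[1,k](H) > k`, and `G` has a
total `[1,k]`-dominating set, then `γ_[1,k](G ∘ H) = γ_t[1,k](G)`. -/
theorem lexProd_oneKDomNum_eq_totalOneKDomNum
    {α β : Type*} [Fintype α] [Fintype β] (k : ℕ) (hk : 2 ≤ k)
    (G : SimpleGraph α) (H : SimpleGraph β)
    (hGconn : G.Connected)
    (hiso : ∃ v : β, ∀ w : β, ¬ H.Adj v w)
    (hH : k < oneKDomNum H k)
    (hT : ∃ D : Set α, IsTotalOneKDom G k D) :
    oneKDomNum (lexProd G H) k = totalOneKDomNum G k := by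
  classical
  obtain ⟨b₀, hb₀⟩ := hiso
  obtain ⟨D₀, hD₀⟩ := hT
  have hb₀' : ∀ h : β, ¬ H.Adj h b₀ := fun h hh => hb₀ h hh.symm
  have hdeg : ∀ g : α, ∃ u, G.Adj g u := by
    intro g
    obtain ⟨u, -, hu⟩ := Set.nonempty_of_ncard_ne_zero (s := {u ∈ D₀ | G.Adj g u})
      (by have := (hD₀ g).1; omega)
    exact ⟨u, hu⟩
  have hβ : k < Fintype.card β := by
    have : oneKDomNum H k ≤ Fintype.card β := by
      apply Nat.sInf_le
      exact ⟨Set.univ, fun v hv => absurd (Set.mem_univ v) hv, by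
        simp [Set.ncard_univ, Nat.card_eq_fintype_card]⟩
    omega
  obtain ⟨Dt, hDt, hDtcard⟩ :
      (totalOneKDomNum G k) ∈ {m | ∃ D : Set α, IsTotalOneKDom G k D ∧ D.ncard = m} :=
    Nat.sInf_mem ⟨D₀.ncard, D₀, hD₀, rfl⟩
  have hinjβ : Function.Injective (fun g : α => (g, b₀)) := fun x y h => congrArg Prod.fst h
  -- upper bound
  have hle : oneKDomNum (lexProd G H) k ≤ totalOneKDomNum G k := by
    apply Nat.sInf_le
    refine ⟨(fun g => (g, b₀)) '' Dt, ?_, by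
      rw [Set.ncard_image_of_injective _ hinjβ, hDtcard]⟩
    intro v _
    have key : {u ∈ (fun g => (g, b₀)) '' Dt | (lexProd G H).Adj v u}
        = (fun g => (g, b₀)) '' {u ∈ Dt | G.Adj v.1 u} := by
      ext ⟨a, h⟩
      simp only [Set.mem_setOf_eq, Set.mem_image, Prod.mk.injEq]
      constructor
      · rintro ⟨⟨g', hg', rfl, rfl⟩, hadj⟩
        rcases hadj with hadj | ⟨heq, hadj⟩
        · exact ⟨g', ⟨hg', hadj⟩, rfl, rfl⟩
        · exact absurd hadj (hb₀' _)
      · rintro ⟨g', ⟨hg', hadj⟩, rfl, rfl⟩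
        exact ⟨⟨g', hg', rfl, rfl⟩, Or.inl hadj⟩
    rw [key, Set.ncard_image_of_injective _ hinjβ]
    exact hDt v.1
  -- lower bound
  have hge : totalOneKDomNum G k ≤ oneKDomNum (lexProd G H) k := by
    obtain ⟨S, hS, hScard⟩ := Nat.sInf_mem
      (⟨(Set.univ : Set (α × β)).ncard, Set.univ,
        fun v hv => absurd (Set.mem_univ v) hv, rfl⟩ :
        {m | ∃ D : Set (α × β), IsOneKDom (lexProd G H) k D ∧ D.ncard = m}.Nonempty)
    -- Fact A : no layer of S is full
    have factA : ∀ g : α, ∃ h : β, (g, h) ∉ S := by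
      by_contra hcon
      push_neg at hcon
      obtain ⟨g₀, hg₀⟩ := hcon
      have step : ∀ {a b : α}, G.Adj a b → (∀ h, (a, h) ∈ S) → (∀ h, (b, h) ∈ S) := by
        intro a b hab hfull
        by_contra hb
        push_neg at hb
        obtain ⟨h', hh'⟩ := hb
        have hcount := (hS (b, h') hh').2
        have hsub : Fintype.card β ≤ {u ∈ S | (lexProd G H).Adj (b, h') u}.ncard := by
          have := Set.ncard_le_ncard_of_injOn (s := (Set.univ : Set β))
            (t := {u ∈ S | (lexProd G H).Adj (b, h') u})
            (fun h => (a, h))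
            (fun h _ => ⟨hfull h, Or.inl hab.symm⟩)
            (fun x _ y _ hxy => congrArg Prod.snd hxy)
            (Set.toFinite _)
          simpa [Set.ncard_univ, Nat.card_eq_fintype_card] using this
        omega
      have allfull : ∀ {a b : α} (_ : G.Walk a b),
          (∀ h, (a, h) ∈ S) → (∀ h, (b, h) ∈ S) := by
        intro a b w
        induction w with
        | nil => exact id
        | cons hadj _ ih => exact fun hf => ih (step hadj hf)
      have hSuniv : S = Set.univ := by
        ext ⟨g, h⟩
        simp only [Set.mem_univ, iff_true]
        exact allfull ((hGconn.preconnected g₀ g).some) hg₀ h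
      have h1 : S.ncard = Fintype.card α * Fintype.card β := by
        rw [hSuniv, Set.ncard_univ, Nat.card_eq_fintype_card, Fintype.card_prod]
      have h2 : S.ncard ≤ Fintype.card α := by
        rw [hScard]
        calc oneKDomNum (lexProd G H) k ≤ totalOneKDomNum G k := hle
        _ ≤ Fintype.card α := by
            rw [← hDtcard]
            simpa [Set.ncard_univ, Nat.card_eq_fintype_card] using
              Set.ncard_le_ncard (Set.subset_univ Dt) (Set.toFinite _)
      have hα : 0 < Fintype.card α := Fintype.card_pos_iff.mpr hGconn.nonempty
      nlinarith [h1, h2, hβ, hk, hα]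
    -- Fact B : every vertex of G has a neighbor whose layer meets S
    have factB : ∀ g : α, ∃ u, G.Adj g u ∧ ∃ h, (u, h) ∈ S := by
      intro g
      by_contra hcon
      push_neg at hcon
      have hSg : IsOneKDom H k {h | (g, h) ∈ S} := by
        intro h hh
        have hkey : {u ∈ S | (lexProd G H).Adj (g, h) u}
            = (fun h' => (g, h')) '' {h' ∈ {h'' | (g, h'') ∈ S} | H.Adj h h'} := by
          ext ⟨a, h'⟩
          simp only [Set.mem_setOf_eq, Set.mem_image, Prod.mk.injEq]
          constructor
          · rintro ⟨hmem, hadj | ⟨rfl, hadj⟩⟩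
            · exact absurd hmem (hcon a hadj h')
            · exact ⟨h', ⟨hmem, hadj⟩, rfl, rfl⟩
          · rintro ⟨h'', ⟨hmem, hadj⟩, rfl, rfl⟩
            exact ⟨hmem, Or.inr ⟨rfl, hadj⟩⟩
        have hcnt := hS (g, h) hh
        rwa [hkey, Set.ncard_image_of_injective _
          (fun x y hxy => congrArg Prod.snd hxy)] at hcnt
      have hbig : k < {h | (g, h) ∈ S}.ncard := by
        have : oneKDomNum H k ≤ {h | (g, h) ∈ S}.ncard := Nat.sInf_le ⟨_, hSg, rfl⟩
        omega
      obtain ⟨g', hg'⟩ := hdeg g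
      have hg'empty : (g', b₀) ∉ S := hcon g' hg' b₀
      have hcount := (hS (g', b₀) hg'empty).2
      have hmono : {h | (g, h) ∈ S}.ncard ≤ {u ∈ S | (lexProd G H).Adj (g', b₀) u}.ncard :=
        Set.ncard_le_ncard_of_injOn (fun h => (g, h))
          (fun h hh => ⟨hh, Or.inl hg'.symm⟩)
          (fun x _ y _ hxy => congrArg Prod.snd hxy)
          (Set.toFinite _)
      omega
    calc totalOneKDomNum G k ≤ (Prod.fst '' S).ncard := by
          apply Nat.sInf_le
          refine ⟨Prod.fst '' S, ?_, rfl⟩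
          intro g
          constructor
          · obtain ⟨u, hadj, h, hu⟩ := factB g
            have hne : {u ∈ Prod.fst '' S | G.Adj g u}.Nonempty :=
              ⟨u, ⟨⟨(u, h), hu, rfl⟩, hadj⟩⟩
            have := (Set.ncard_pos (Set.toFinite _)).mpr hne
            omega
          · obtain ⟨h, hh⟩ := factA g
            have hcount := (hS (g, h) hh).2
            have hmono : {u ∈ Prod.fst '' S | G.Adj g u}.ncard
                ≤ {u ∈ S | (lexProd G H).Adj (g, h) u}.ncard := by
              apply Set.ncard_le_ncard_of_injOn
                (fun u => (u, if hu : ∃ y, (u, y) ∈ S then hu.choose else b₀))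
              · intro a ha
                obtain ⟨⟨p, hp, hpa⟩, hadj⟩ := ha
                subst hpa
                have hex : ∃ y, (p.1, y) ∈ S := ⟨p.2, by simpa using hp⟩
                simp only [dif_pos hex]
                exact ⟨hex.choose_spec, Or.inl hadj⟩
              · exact fun x _ y _ hxy => congrArg Prod.fst hxy
            omega
      _ ≤ S.ncard := Set.ncard_image_le (Set.toFinite _)
      _ = _ := hScard
  exact le_antisymm hle hge
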